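/- Let R > 0, ν > 1, and let l₁, l₂ > 0 with l₁ + l₂ = πR; set α₁ := sin(l₁/(2R)), α₂ := sin(l₂/(2R)), and h₊(x) := (1/ν)( −sin²[x/(2R)] + cos[x/(2R)]√(ν² − sin²[x/(2R)]) ). Then ∫₀^{l₁} ( h₊(σ + πR) − h₊(σ + 2πR − l₁) ) dσ = H(α₂,ν) + H(α₁,ν) − H(1,ν) − (R/ν)·sin(l₁/R), where H(α,ν) := R( (α/ν)√(ν² − α²) + ν arcsin(α/ν) ). -/

import Mathlib

open Real intervalIntegral

/-- `h₊(x) = (1/ν)(−sin²[x/(2R)] + cos[x/(2R)] √(ν² − sin²[x/(2R)]))`. -/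
noncomputable def hPlus (R ν x : ℝ) : ℝ :=
  (1 / ν) * (-(sin (x / (2 * R))) ^ 2
    + cos (x / (2 * R)) * Real.sqrt (ν ^ 2 - (sin (x / (2 * R))) ^ 2))

/-- `H(α,ν) = R((α/ν)√(ν² − α²) + ν arcsin(α/ν))`. -/
noncomputable def Hfun (R α ν : ℝ) : ℝ :=
  R * ((α / ν) * Real.sqrt (ν ^ 2 - α ^ 2) + ν * arcsin (α / ν))

noncomputable def Ffun (R ν x : ℝ) : ℝ :=
  Hfun R (sin (x / (2 * R))) ν
    + (R / ν) * (sin (x / (2 * R)) * cos (x / (2 * R)) - x / (2 * R))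

lemma hasDerivAt_Ffun (R ν : ℝ) (hR : 0 < R) (hν : 1 < ν) (x : ℝ) :
    HasDerivAt (Ffun R ν) (hPlus R ν x) x := by
  have hR' : (2 * R) ≠ 0 := by positivity
  have hν0 : (0:ℝ) < ν := lt_trans one_pos hν
  set s := sin (x / (2 * R)) with hs_def
  set c := cos (x / (2 * R)) with hc_def
  have hs2 : s ^ 2 ≤ 1 := sin_sq_le_one _
  have hpos : 0 < ν ^ 2 - s ^ 2 := by nlinarith
  set q := Real.sqrt (ν ^ 2 - s ^ 2) with hq_def
  have hq0 : 0 < q := Real.sqrt_pos.mpr hpos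
  have hq2 : q ^ 2 = ν ^ 2 - s ^ 2 := Real.sq_sqrt hpos.le
  have hu : HasDerivAt (fun x : ℝ => x / (2 * R)) (1 / (2 * R)) x := by
    simpa using (hasDerivAt_id x).div_const (2 * R)
  have hs : HasDerivAt (fun x : ℝ => sin (x / (2 * R))) (c * (1 / (2 * R))) x := hu.sin
  have hc : HasDerivAt (fun x : ℝ => cos (x / (2 * R))) (-s * (1 / (2 * R))) x := hu.cos
  -- sqrt term
  have hin : HasDerivAt (fun x : ℝ => ν ^ 2 - sin (x / (2 * R)) ^ 2)
      (-(2 * s * (c * (1 / (2 * R))))) x := by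
    simpa using ((hs.pow 2).const_sub (ν ^ 2))
  have hsqrt : HasDerivAt (fun x : ℝ => Real.sqrt (ν ^ 2 - sin (x / (2 * R)) ^ 2))
      (-(2 * s * (c * (1 / (2 * R)))) / (2 * q)) x := hin.sqrt (by
        simpa [← hs_def] using hpos.ne')
  -- arcsin term
  have hdiv : HasDerivAt (fun x : ℝ => sin (x / (2 * R)) / ν) (c * (1 / (2 * R)) / ν) x :=
    hs.div_const ν
  have habs : |s / ν| < 1 := by
    rw [abs_div, abs_of_pos hν0, div_lt_one hν0]
    nlinarith [abs_nonneg s, sq_abs s, abs_nonneg s]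
  have hne1 : s / ν ≠ 1 := by intro h; rw [h] at habs; simp at habs
  have hnem1 : s / ν ≠ -1 := by intro h; rw [h] at habs; simp at habs
  have harcsin : HasDerivAt (fun x : ℝ => arcsin (sin (x / (2 * R)) / ν))
      ((1 / Real.sqrt (1 - (s / ν) ^ 2)) * (c * (1 / (2 * R)) / ν)) x :=
    HasDerivAt.comp (h₂ := arcsin) x (Real.hasDerivAt_arcsin hnem1 hne1) hdiv
  have hsq1 : Real.sqrt (1 - (s / ν) ^ 2) = q / ν := by
    rw [show (1 : ℝ) - (s / ν) ^ 2 = (ν ^ 2 - s ^ 2) / ν ^ 2 by field_simp,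
      Real.sqrt_div hpos.le, Real.sqrt_sq hν0.le]
  rw [hsq1] at harcsin
  -- assemble Hfun part
  have h2 : HasDerivAt
      (fun x : ℝ => (R / ν) * (sin (x / (2 * R)) * cos (x / (2 * R)) - x / (2 * R)))
      ((R / ν) * ((c * (1 / (2 * R)) * c + s * (-s * (1 / (2 * R)))) - 1 / (2 * R))) x :=
    ((hs.mul hc).sub hu).const_mul (R / ν)
  have hall := (((hdiv.mul hsqrt).add (harcsin.const_mul ν)).const_mul R).add h2
  refine HasDerivAt.congr_deriv (f := Ffun R ν) hall ?_
  symm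

  have hν' : ν ≠ 0 := hν0.ne'
  have hq' : q ≠ 0 := hq0.ne'
  rw [hPlus]
  simp only [← hs_def, ← hc_def, ← hq_def]
  field_simp
  ring_nf
  have hcs : s ^ 2 + c ^ 2 = 1 := sin_sq_add_cos_sq _
  linear_combination c * hq2 - q * hcs

lemma continuous_hPlus (R ν : ℝ) : Continuous (hPlus R ν) := by
  unfold hPlus
  fun_prop

/-- For `ν > 1` and `l₁, l₂ > 0` with `l₁ + l₂ = πR`, with `α₁ = sin(l₁/(2R))`,
`α₂ = sin(l₂/(2R))`, one has
`∫₀^{l₁} (h₊(σ + πR) − h₊(σ + 2πR − l₁)) dσ = H(α₂,ν) + H(α₁,ν) − H(1,ν) − (R/ν) sin(l₁/R)`. -/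
theorem integral_h_opposite (R ν l₁ l₂ : ℝ) (hR : 0 < R) (hν : 1 < ν)
    (hl₁ : 0 < l₁) (hl₂ : 0 < l₂) (hsum : l₁ + l₂ = π * R) :
    ∫ σ in (0 : ℝ)..l₁, (hPlus R ν (σ + π * R) - hPlus R ν (σ + 2 * π * R - l₁)) =
      Hfun R (sin (l₂ / (2 * R))) ν + Hfun R (sin (l₁ / (2 * R))) ν
        - Hfun R 1 ν - (R / ν) * sin (l₁ / R) := by
  have hR' : (2 * R) ≠ 0 := by positivity
  have key : ∀ σ ∈ Set.uIcc (0:ℝ) l₁,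
      HasDerivAt (fun σ => Ffun R ν (σ + π * R) - Ffun R ν (σ + 2 * π * R - l₁))
        (hPlus R ν (σ + π * R) - hPlus R ν (σ + 2 * π * R - l₁)) σ := by
    intro σ _
    have h1 : HasDerivAt (fun σ : ℝ => σ + π * R) 1 σ := (hasDerivAt_id σ).add_const _
    have h2 : HasDerivAt (fun σ : ℝ => σ + 2 * π * R - l₁) 1 σ :=
      ((hasDerivAt_id σ).add_const _).sub_const _
    have H1 := (hasDerivAt_Ffun R ν hR hν (σ + π * R)).comp σ h1
    have H2 := (hasDerivAt_Ffun R ν hR hν (σ + 2 * π * R - l₁)).comp σ h2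
    exact (H1.sub H2).congr_deriv (by simp)
  have hint : IntervalIntegrable
      (fun σ => hPlus R ν (σ + π * R) - hPlus R ν (σ + 2 * π * R - l₁))
      MeasureTheory.volume 0 l₁ :=
    (((continuous_hPlus R ν).comp (continuous_id.add continuous_const)).sub
      ((continuous_hPlus R ν).comp ((continuous_id.add continuous_const).sub
        continuous_const))).intervalIntegrable _ _
  rw [intervalIntegral.integral_eq_sub_of_hasDerivAt key hint]
  set a := l₁ / (2 * R) with ha
  have e1 : (l₁ + π * R) / (2 * R) = a + π / 2 := by rw [ha]; field_simp
  have e2 : (l₁ + 2 * π * R - l₁) / (2 * R) = π := by field_simp; ring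
  have e3 : ((0:ℝ) + π * R) / (2 * R) = π / 2 := by field_simp; ring
  have e4 : ((0:ℝ) + 2 * π * R - l₁) / (2 * R) = π - a := by rw [ha]; field_simp; ring
  have e5 : l₂ / (2 * R) = π / 2 - a := by
    rw [ha]; field_simp; nlinarith [hsum]
  have e6 : l₁ / R = 2 * a := by rw [ha]; field_simp
  rw [e5, e6]
  unfold Ffun
  rw [e1, e2, e3, e4]
  rw [sin_pi_div_two_sub, sin_add, cos_add, sin_pi_div_two, cos_pi_div_two,
    sin_pi_sub, cos_pi_sub, Real.sin_pi, Real.cos_pi, sin_two_mul]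
  have h0 : Hfun R 0 ν = 0 := by simp [Hfun]
  simp only [mul_zero, zero_mul, mul_one, one_mul, mul_neg, neg_mul, add_zero, zero_add, h0]
  ring_nf
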